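/- The critical values of f are distributed on circles of radius (3d−1)·|v_n|^{3d/(3d−1)} centred at the critical values of f': for every critical value z of f there exists a critical value z' of f' with |z − z'| = (3d−1)·|v_n|^{3d/(3d−1)}, and conversely for every critical value z' of f' there exists a critical value z of f with |z − z'| = (3d−1)·|v_n|^{3d/(3d−1)} (the exponent denoting the real power of the nonnegative real number |v_n|). -/

import Mathlib

open MvPolynomial

/-- The linearly perturbed Brieskorn–Pham polynomial
`f = y³ − 3v₀y + Σ_κ (x_κ^{3d} − 3d·v_κ·x_κ)`, in the variables `y` (variable `0`) and
`x_κ` (variable `κ+1`). -/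
noncomputable def hlPoly (n d : ℕ) (v₀ : ℂ) (v : Fin n → ℂ) :
    MvPolynomial (Fin (n + 1)) ℂ :=
  X 0 ^ 3 - C (3 * v₀) * X 0 +
    ∑ κ : Fin n, (X κ.succ ^ (3 * d) - C (3 * (d : ℂ) * v κ) * X κ.succ)

/-- The set of critical values of the linearly perturbed Brieskorn–Pham polynomial. -/
def hlCritVals (n d : ℕ) (v₀ : ℂ) (v : Fin n → ℂ) : Set ℂ :=
  {z | ∃ w : Fin (n + 1) → ℂ, (∀ j, eval w (pderiv j (hlPoly n d v₀ v)) = 0) ∧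
    eval w (hlPoly n d v₀ v) = z}

set_option maxHeartbeats 1000000

lemma eval_hlPoly (n d : ℕ) (v₀ : ℂ) (v : Fin n → ℂ) (w : Fin (n+1) → ℂ) :
    eval w (hlPoly n d v₀ v) =
      w 0 ^ 3 - 3 * v₀ * w 0 + ∑ κ : Fin n, (w κ.succ ^ (3*d) - 3 * d * v κ * w κ.succ) := by
  simp [hlPoly]

lemma eval_pderiv_zero (n d : ℕ) (v₀ : ℂ) (v : Fin n → ℂ) (w : Fin (n+1) → ℂ) :
    eval w (pderiv 0 (hlPoly n d v₀ v)) = 3 * w 0 ^ 2 - 3 * v₀ := by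
  have h : ∀ κ : Fin n, (κ.succ : Fin (n+1)) ≠ 0 := fun κ => Fin.succ_ne_zero κ
  simp [hlPoly, pderiv_pow, pderiv_C, pderiv_X_of_ne, h]

lemma eval_pderiv_succ (n d : ℕ) (v₀ : ℂ) (v : Fin n → ℂ) (w : Fin (n+1) → ℂ) (i : Fin n) :
    eval w (pderiv i.succ (hlPoly n d v₀ v)) =
      3 * d * w i.succ ^ (3*d - 1) - 3 * d * v i := by
  have h0 : (0 : Fin (n+1)) ≠ i.succ := (Fin.succ_ne_zero i).symm
  simp [hlPoly, pderiv_pow, pderiv_C, Pi.single_apply, Fin.succ_inj, h0,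
    Finset.mul_sum, mul_ite, ite_mul, Finset.sum_ite_eq']

lemma eval_split (m d : ℕ) (v₀ : ℂ) (v : Fin (m+1) → ℂ) (w : Fin (m+2) → ℂ) :
    eval w (hlPoly (m+1) d v₀ v) =
      eval (fun j => w j.castSucc) (hlPoly m d v₀ (fun κ => v κ.castSucc)) +
        (w (Fin.last m).succ ^ (3*d) - 3*d*v (Fin.last m) * w (Fin.last m).succ) := by
  simp only [eval_hlPoly, Fin.sum_univ_castSucc, Fin.succ_castSucc, Fin.castSucc_zero]
  ring

lemma abs_key (d : ℕ) (hd : 1 ≤ d) (x vl : ℂ) (h : x ^ (3*d-1) = vl) :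
    ‖(1 - 3*(d:ℂ)) * vl * x‖ =
      (3 * (d : ℝ) - 1) * ‖vl‖ ^ ((3 * (d : ℝ)) / (3 * (d : ℝ) - 1)) := by
  have hd1 : (1:ℝ) ≤ (d:ℝ) := by exact_mod_cast hd
  have hne : (3*(d:ℝ) - 1) ≠ 0 := by linarith
  set a := ‖x‖ with ha
  have ha0 : 0 ≤ a := norm_nonneg x
  have hv : ‖vl‖ = a ^ (3*d-1) := by rw [← h, norm_pow]
  have h1 : ‖(1 - 3*(d:ℂ))‖ = 3*(d:ℝ) - 1 := by
    have : (1 - 3*(d:ℂ)) = ((1 - 3*(d:ℝ) : ℝ) : ℂ) := by push_cast; ring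
    rw [this, Complex.norm_real, Real.norm_eq_abs, abs_of_nonpos (by linarith)]
    ring
  rw [norm_mul, norm_mul, h1, hv]
  have hcast : ((3*d-1 : ℕ) : ℝ) = 3*(d:ℝ) - 1 := by
    have : 1 ≤ 3*d := by omega
    push_cast [this]; ring
  have h2 : (a ^ (3*d-1)) ^ ((3 * (d : ℝ)) / (3 * (d : ℝ) - 1)) = a ^ (3*d) := by
    rw [← Real.rpow_natCast a (3*d-1), ← Real.rpow_mul ha0, hcast,
      mul_div_cancel₀ _ hne]
    rw [show ((3:ℝ)*(d:ℝ)) = ((3*d : ℕ) : ℝ) by push_cast; ring, Real.rpow_natCast]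
  rw [h2]
  have h3 : a ^ (3*d-1) * a = a ^ (3*d) := by
    rw [← pow_succ]
    congr 1
    omega
  rw [mul_assoc, h3]

/-- the critical values of `f` (in the variables `y, x₁, …, x_n`,
`n = m+1`) are distributed on circles of radius `(3d−1)·|v_n|^{3d/(3d−1)}` centred at
the critical values of `f'` (in the variables `y, x₁, …, x_{n−1}`). -/
theorem hl_critical_values_on_circles (m d : ℕ) (hd : 1 ≤ d)
    (v₀ : ℂ) (v : Fin (m + 1) → ℂ) :
    (∀ z ∈ hlCritVals (m + 1) d v₀ v,
      ∃ z' ∈ hlCritVals m d v₀ (fun κ : Fin m => v κ.castSucc),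
        ‖z - z'‖ =
          (3 * (d : ℝ) - 1) *
            ‖v (Fin.last m)‖ ^ ((3 * (d : ℝ)) / (3 * (d : ℝ) - 1))) ∧
    (∀ z' ∈ hlCritVals m d v₀ (fun κ : Fin m => v κ.castSucc),
      ∃ z ∈ hlCritVals (m + 1) d v₀ v,
        ‖z - z'‖ =
          (3 * (d : ℝ) - 1) *
            ‖v (Fin.last m)‖ ^ ((3 * (d : ℝ)) / (3 * (d : ℝ) - 1))) := by
  have hd3 : (3 * (d:ℂ)) ≠ 0 := by
    simp only [ne_eq, mul_eq_zero, Nat.cast_eq_zero]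
    push_neg
    exact ⟨by norm_num, by omega⟩
  simp only [hlCritVals, Set.mem_setOf_eq]
  constructor
  · rintro z ⟨w, hcrit, rfl⟩
    set x := w (Fin.last m).succ with hx
    have hroot : x ^ (3*d-1) = v (Fin.last m) := by
      have := hcrit (Fin.last m).succ
      rw [eval_pderiv_succ] at this
      have h2 : 3 * (d:ℂ) * x ^ (3*d-1) = 3 * (d:ℂ) * v (Fin.last m) := by
        linear_combination this
      exact mul_left_cancel₀ hd3 h2
    refine ⟨_, ⟨fun j => w j.castSucc, ?_, rfl⟩, ?_⟩
    · intro j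
      induction j using Fin.cases with
      | zero =>
        rw [eval_pderiv_zero]
        have := hcrit 0
        rw [eval_pderiv_zero] at this
        simpa using this
      | succ κ =>
        rw [eval_pderiv_succ]
        have := hcrit κ.castSucc.succ
        rw [eval_pderiv_succ] at this
        rw [Fin.succ_castSucc] at this
        exact this
    · rw [eval_split]
      have hxx : x ^ (3*d) = v (Fin.last m) * x := by
        rw [show 3*d = (3*d-1) + 1 by omega, pow_succ, hroot]
      rw [show ∀ A B : ℂ, A + B - A = B from fun A B => by ring, hxx]
      rw [show v (Fin.last m) * x - 3*(d:ℂ)*v (Fin.last m)*x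
          = (1 - 3*(d:ℂ)) * v (Fin.last m) * x by ring]
      exact abs_key d hd x _ hroot
  · rintro z' ⟨w', hcrit', rfl⟩
    obtain ⟨x, hroot⟩ := IsAlgClosed.exists_pow_nat_eq (k := ℂ) (v (Fin.last m))
      (n := 3*d-1) (by omega)
    set w : Fin (m+2) → ℂ := Fin.snoc w' x with hw
    have hwc : ∀ j : Fin (m+1), w j.castSucc = w' j := fun j => Fin.snoc_castSucc _ _ _
    have hwl : w (Fin.last m).succ = x := by
      rw [Fin.succ_last]; exact Fin.snoc_last _ _
    refine ⟨_, ⟨w, ?_, rfl⟩, ?_⟩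
    · intro j
      induction j using Fin.cases with
      | zero =>
        rw [eval_pderiv_zero]
        have := hcrit' 0
        rw [eval_pderiv_zero] at this
        have h0 : w 0 = w' 0 := by
          rw [show (0 : Fin (m+2)) = (0 : Fin (m+1)).castSucc from rfl, hwc]
        rw [h0]; exact this
      | succ κ =>
        induction κ using Fin.lastCases with
        | last =>
          rw [eval_pderiv_succ, hwl, hroot]
          ring
        | cast κ =>
          rw [eval_pderiv_succ]
          have := hcrit' κ.succ
          rw [eval_pderiv_succ] at this
          rw [Fin.succ_castSucc, hwc]
          exact this
    · rw [eval_split]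
      have hev : eval (fun j => w j.castSucc) (hlPoly m d v₀ (fun κ => v κ.castSucc))
          = eval w' (hlPoly m d v₀ (fun κ => v κ.castSucc)) := by
        rw [show (fun j => w j.castSucc) = w' from funext hwc]
      rw [hev, hwl]
      have hxx : x ^ (3*d) = v (Fin.last m) * x := by
        rw [show 3*d = (3*d-1) + 1 by omega, pow_succ, hroot]
      rw [show ∀ A B : ℂ, A + B - A = B from fun A B => by ring, hxx]
      rw [show v (Fin.last m) * x - 3*(d:ℂ)*v (Fin.last m)*x
          = (1 - 3*(d:ℂ)) * v (Fin.last m) * x by ring]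
      exact abs_key d hd x _ hroot
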